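/- Let n be a finite index type, let Z be an n × n complex symmetric matrix (Zᵀ = Z) whose entrywise real part is positive semidefinite, let R_d > 0 be real, let F be an M × n complex matrix and v ∈ ℂ^n. Define A(θ) = i·diag(θ) + R_d·I + Z and T(θ) = F · A(θ)⁻¹ · v. Then for every θ ∈ ℝ^n and every index k ∈ n, the directional derivative of T at θ in the direction of the standard basis vector e_k equals −i · (A(θ)⁻¹ v)_k · (F · A(θ)⁻¹) e_k; that is, the m-th component of fderiv ℝ T θ (e_k) is −i · (A(θ)⁻¹ *ᵥ v)_k · (F · A(θ)⁻¹)_{m,k}. Equivalently, the complex Jacobian matrix of T at θ is −i · F · A(θ)⁻¹ · diag(A(θ)⁻¹ v). -/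

import Mathlib

open Matrix

attribute [local instance] Matrix.linftyOpNormedRing Matrix.linftyOpNormedAlgebra
  Matrix.linftyOpNormedAddCommGroup Matrix.linftyOpNormedSpace


/-- The loaded impedance matrix `A(θ) = i·diag(θ) + R_d·I + Z` of a DSA. -/
noncomputable def loadedMatrix {n : Type*} [Fintype n] [DecidableEq n]
    (Z : Matrix n n ℂ) (Rd : ℝ) (θ : n → ℝ) : Matrix n n ℂ :=
  Complex.I • Matrix.diagonal (fun k => (θ k : ℂ)) + (Rd : ℂ) • (1 : Matrix n n ℂ) + Z

section aux
variable {n : Type*} [Fintype n] [DecidableEq n] {M : ℕ}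

/-- The linear map `h ↦ i·diag(h)`. -/
noncomputable def diagCLM (n : Type*) [Fintype n] [DecidableEq n] :
    (n → ℝ) →L[ℝ] Matrix n n ℂ :=
  LinearMap.toContinuousLinearMap
  { toFun := fun h => Complex.I • Matrix.diagonal (fun k => (h k : ℂ))
    map_add' := fun h g => by
      ext i j
      rcases eq_or_ne i j with hij | hij <;>
        simp [Matrix.diagonal_apply, hij] <;> push_cast <;> ring
    map_smul' := fun r h => by
      ext i j
      rcases eq_or_ne i j with hij | hij <;>
        simp [Matrix.diagonal_apply, hij] <;> push_cast <;> ring }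

@[simp] lemma diagCLM_apply (h : n → ℝ) :
    diagCLM n h = Complex.I • Matrix.diagonal (fun k => (h k : ℂ)) := rfl

/-- The linear map `B ↦ (F·B)·v`. -/
noncomputable def respCLM (F : Matrix (Fin M) n ℂ) (v : n → ℂ) :
    Matrix n n ℂ →L[ℝ] (Fin M → ℂ) :=
  LinearMap.toContinuousLinearMap
  { toFun := fun B => (F * B) *ᵥ v
    map_add' := fun B C => by simp [Matrix.mul_add, Matrix.add_mulVec]
    map_smul' := fun r B => by simp [Matrix.mul_smul, Matrix.smul_mulVec] }

@[simp] lemma respCLM_apply (F : Matrix (Fin M) n ℂ) (v : n → ℂ) (B : Matrix n n ℂ) :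
    respCLM F v B = (F * B) *ᵥ v := rfl

lemma hasFDerivAt_loadedMatrix (Z : Matrix n n ℂ) (Rd : ℝ) (θ : n → ℝ) :
    HasFDerivAt (loadedMatrix Z Rd) (diagCLM n) θ := by
  have : loadedMatrix Z Rd = fun θ => diagCLM n θ + ((Rd : ℂ) • (1 : Matrix n n ℂ) + Z) := by
    funext θ
    simp [loadedMatrix, add_assoc]
  rw [this]
  exact (diagCLM n).hasFDerivAt.add_const _
end aux

lemma loadedMatrix_isUnit {n : Type*} [Fintype n] [DecidableEq n]
    (Z : Matrix n n ℂ) (hZsym : Zᵀ = Z)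
    (hR : (Matrix.of fun i j => (Z i j).re : Matrix n n ℝ).PosSemidef)
    (Rd : ℝ) (hRd : 0 < Rd) (θ : n → ℝ) : IsUnit (loadedMatrix Z Rd θ) := by
  rw [Matrix.isUnit_iff_isUnit_det, isUnit_iff_ne_zero]
  intro hdet
  obtain ⟨x, hx, hAx⟩ := (Matrix.exists_mulVec_eq_zero_iff).2 hdet
  set a : n → ℝ := fun i => (x i).re with ha
  set b : n → ℝ := fun i => (x i).im with hb
  have hc : star x ⬝ᵥ (loadedMatrix Z Rd θ *ᵥ x) = 0 := by rw [hAx, dotProduct_zero]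
  have hexp : star x ⬝ᵥ (loadedMatrix Z Rd θ *ᵥ x)
      = Complex.I * ((∑ k, θ k * Complex.normSq (x k) : ℝ) : ℂ)
        + (Rd : ℂ) * ((∑ k, Complex.normSq (x k) : ℝ) : ℂ)
        + ∑ i, ∑ j, (starRingEnd ℂ) (x i) * (Z i j * x j) := by
    simp only [dotProduct, Matrix.mulVec, loadedMatrix, Matrix.add_apply, Matrix.smul_apply,
      Matrix.diagonal_apply, Matrix.one_apply, smul_eq_mul, Pi.star_apply, RCLike.star_def,
      dotProduct]
    push_cast
    rw [Finset.mul_sum, Finset.mul_sum, ← Finset.sum_add_distrib, ← Finset.sum_add_distrib]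
    apply Finset.sum_congr rfl; intro i _
    rw [Finset.mul_sum]
    have : ∀ j, (starRingEnd ℂ) (x i) *
        ((Complex.I * (if i = j then (θ i : ℂ) else 0) + (Rd : ℂ) * (if i = j then 1 else 0)
          + Z i j) * x j)
        = (if i = j then Complex.I * (θ i : ℂ) * ((starRingEnd ℂ) (x j) * x j) else 0)
          + (if i = j then (Rd : ℂ) * ((starRingEnd ℂ) (x j) * x j) else 0)
          + (starRingEnd ℂ) (x i) * (Z i j * x j) := by
      intro j
      by_cases h : i = j <;> simp [h] <;> ring
    rw [Finset.sum_congr rfl fun j _ => this j]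
    rw [Finset.sum_add_distrib, Finset.sum_add_distrib, Finset.sum_ite_eq, Finset.sum_ite_eq]
    simp only [Finset.mem_univ, if_true]
    rw [Complex.normSq_eq_conj_mul_self]
    ring
  -- imaginary-part-free real part computation
  have hQ : (∑ i, ∑ j, (starRingEnd ℂ) (x i) * (Z i j * x j)).re
      = (∑ i, ∑ j, (Z i j).re * (a i * a j) + ∑ i, ∑ j, (Z i j).re * (b i * b j))
        + ∑ i, ∑ j, (Z i j).im * (b i * a j - a i * b j) := by
    rw [Complex.re_sum]
    rw [← Finset.sum_add_distrib, ← Finset.sum_add_distrib]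
    apply Finset.sum_congr rfl; intro i _
    rw [Complex.re_sum, ← Finset.sum_add_distrib, ← Finset.sum_add_distrib]
    apply Finset.sum_congr rfl; intro j _
    simp only [Complex.mul_re, Complex.mul_im, Complex.conj_re, Complex.conj_im]
    ring
  have hY : ∑ i, ∑ j, (Z i j).im * (b i * a j - a i * b j) = 0 := by
    have h2 : ∀ i j, (Z j i).im = (Z i j).im := by
      intro i j
      conv_lhs => rw [← hZsym]
      rfl
    have hswap : ∑ i, ∑ j, (Z i j).im * (b i * a j - a i * b j)
        = ∑ i, ∑ j, (Z i j).im * (b j * a i - a j * b i) := by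
      rw [Finset.sum_comm]
      apply Finset.sum_congr rfl; intro i _
      apply Finset.sum_congr rfl; intro j _
      rw [h2]
    have : (∑ i, ∑ j, (Z i j).im * (b i * a j - a i * b j))
        + ∑ i, ∑ j, (Z i j).im * (b i * a j - a i * b j) = 0 := by
      nth_rewrite 2 [hswap]
      rw [← Finset.sum_add_distrib]
      apply Finset.sum_eq_zero; intro i _
      rw [← Finset.sum_add_distrib]
      apply Finset.sum_eq_zero; intro j _
      ring
    linarith
  have hXa : 0 ≤ ∑ i, ∑ j, (Z i j).re * (a i * a j) := by
    have := hR.dotProduct_mulVec_nonneg a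
    simpa [dotProduct, Matrix.mulVec, Finset.mul_sum, mul_comm, mul_left_comm,
      mul_assoc] using this
  have hXb : 0 ≤ ∑ i, ∑ j, (Z i j).re * (b i * b j) := by
    have := hR.dotProduct_mulVec_nonneg b
    simpa [dotProduct, Matrix.mulVec, Finset.mul_sum, mul_comm, mul_left_comm,
      mul_assoc] using this
  have hs2 : 0 < ∑ k, Complex.normSq (x k) := by
    obtain ⟨k, hk⟩ := Function.ne_iff.1 hx
    exact Finset.sum_pos' (fun i _ => Complex.normSq_nonneg _)
      ⟨k, Finset.mem_univ k, by simpa [Complex.normSq_pos] using hk⟩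
  have hre : (star x ⬝ᵥ (loadedMatrix Z Rd θ *ᵥ x)).re = 0 := by rw [hc]; simp
  rw [hexp] at hre
  simp only [Complex.add_re, Complex.mul_re, Complex.I_re, Complex.I_im, Complex.ofReal_re,
    Complex.ofReal_im, zero_mul, one_mul, mul_zero, sub_zero, zero_sub] at hre
  rw [hQ, hY] at hre
  nlinarith


/-- **Jacobian of the DSA response (equations (22)–(23) of the paper).**
For `T(θ) = F·A(θ)⁻¹·v` with `A(θ) = i·diag(θ) + R_d·I + Z`, the directional derivative of
`T` at `θ` along the `k`-th standard basis vector is `−i·(A(θ)⁻¹v)_k · (F·A(θ)⁻¹)e_k`;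
equivalently, the complex Jacobian matrix of `T` at `θ` is
`−i · F·A(θ)⁻¹·diag(A(θ)⁻¹v)`. -/
theorem dsa_response_jacobian {n : Type*} [Fintype n] [DecidableEq n] (M : ℕ)
    (Z : Matrix n n ℂ) (hZsym : Zᵀ = Z)
    (hR : (Matrix.of fun i j => (Z i j).re : Matrix n n ℝ).PosSemidef)
    (Rd : ℝ) (hRd : 0 < Rd)
    (F : Matrix (Fin M) n ℂ) (v : n → ℂ)
    (T : (n → ℝ) → (Fin M → ℂ))
    (hT : ∀ θ, T θ = F *ᵥ ((loadedMatrix Z Rd θ)⁻¹ *ᵥ v)) :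
    ∀ (θ : n → ℝ) (k : n),
      (∀ m : Fin M, fderiv ℝ T θ (Pi.single k 1) m =
        -Complex.I * ((loadedMatrix Z Rd θ)⁻¹ *ᵥ v) k *
          (F * (loadedMatrix Z Rd θ)⁻¹) m k) ∧
      Matrix.of (fun (m : Fin M) (k' : n) => fderiv ℝ T θ (Pi.single k' 1) m) =
        (-Complex.I) • (F * (loadedMatrix Z Rd θ)⁻¹ *
          Matrix.diagonal ((loadedMatrix Z Rd θ)⁻¹ *ᵥ v)) := by
  intro θ k₀
  obtain ⟨u, hu⟩ := loadedMatrix_isUnit Z hZsym hR Rd hRd θ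
  set B : Matrix n n ℂ := (loadedMatrix Z Rd θ)⁻¹ with hB
  have huinv : (↑u⁻¹ : Matrix n n ℂ) = B := by
    rw [hB, Matrix.nonsing_inv_eq_ringInverse, ← hu, Ring.inverse_unit]
  -- T as composition
  have hTeq : T = fun θ' => respCLM F v (Ring.inverse (loadedMatrix Z Rd θ')) := by
    funext θ'
    rw [hT θ', respCLM_apply, ← Matrix.mulVec_mulVec, Matrix.nonsing_inv_eq_ringInverse]
  -- derivative of the inverse map
  have hinv : HasFDerivAt (fun θ' => Ring.inverse (loadedMatrix Z Rd θ'))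
      ((-(ContinuousLinearMap.mulLeftRight ℝ (Matrix n n ℂ) ↑u⁻¹ ↑u⁻¹)).comp (diagCLM n)) θ := by
    have h1 : HasFDerivAt (Ring.inverse : Matrix n n ℂ → Matrix n n ℂ)
        (-(ContinuousLinearMap.mulLeftRight ℝ (Matrix n n ℂ) ↑u⁻¹ ↑u⁻¹))
        (loadedMatrix Z Rd θ) := hu ▸ hasFDerivAt_ringInverse (𝕜 := ℝ) u
    exact h1.comp θ (hasFDerivAt_loadedMatrix Z Rd θ)
  have hTder : HasFDerivAt T ((respCLM F v).comp
      ((-(ContinuousLinearMap.mulLeftRight ℝ (Matrix n n ℂ) ↑u⁻¹ ↑u⁻¹)).comp (diagCLM n))) θ := by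
    rw [hTeq]
    exact (respCLM F v).hasFDerivAt.comp θ hinv
  have hfd := hTder.fderiv
  -- evaluate the derivative at a basis direction
  have hval : ∀ (k : n) (m : Fin M), fderiv ℝ T θ (Pi.single k 1) m =
      -Complex.I * (B *ᵥ v) k * (F * B) m k := by
    intro k m
    rw [hfd]
    change respCLM F v (-(ContinuousLinearMap.mulLeftRight ℝ (Matrix n n ℂ) ↑u⁻¹ ↑u⁻¹)
      (diagCLM n (Pi.single k 1))) m = _
    simp only [ContinuousLinearMap.comp_apply, diagCLM_apply, ContinuousLinearMap.neg_apply,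
      ContinuousLinearMap.mulLeftRight_apply, respCLM_apply, huinv]
    have h0 : (fun j => (((Pi.single k 1 : n → ℝ) j : ℝ) : ℂ)) = Pi.single k (1 : ℂ) := by
      funext j
      rcases eq_or_ne j k with h | h <;> simp [Pi.single_apply, h]
    rw [h0]
    have h2 : F * -(B * (Complex.I • Matrix.diagonal (Pi.single k (1 : ℂ))) * B)
        = -(Complex.I • (F * B * Matrix.diagonal (Pi.single k (1 : ℂ)) * B)) := by
      simp only [Matrix.mul_neg, Matrix.mul_smul, Matrix.smul_mul, Matrix.mul_assoc]
    rw [h2, Matrix.neg_mulVec, Matrix.smul_mulVec]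
    rw [← Matrix.mulVec_mulVec, ← Matrix.mulVec_mulVec]
    rw [show Matrix.diagonal (Pi.single k (1:ℂ)) *ᵥ (B *ᵥ v)
          = Pi.single k ((B *ᵥ v) k) from by
        funext i
        rw [Matrix.mulVec_diagonal]
        rcases eq_or_ne i k with h | h <;> simp [Pi.single_apply, h]]
    simp only [Matrix.mulVec_single, Pi.neg_apply, Pi.smul_apply, smul_eq_mul,
      op_smul_eq_mul, Matrix.col_apply]
    ring
  refine ⟨fun m => hval k₀ m, ?_⟩
  ext m k'
  rw [Matrix.of_apply, hval k' m]
  simp only [Matrix.smul_apply, Matrix.mul_apply, Matrix.diagonal_apply, smul_eq_mul,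
    mul_ite, mul_zero, Finset.sum_ite_eq', Finset.mem_univ, if_true]
  ring
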